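/- arXiv:1212.6672 — 4 statements merged into one kernel-verified Lean document; each statement's English description precedes it below -/
import Mathlib

section
/- Suppose the polynomial Bohnenblust–Hille inequality holds with constant D^m: for every m-homogeneous polynomial P(z) = ∑_{|α|=m} a_α z^α on ℂ^n, (∑_α |a_α|^{2m/(m+1)})^{(m+1)/(2m)} ≤ D^m · sup_{z∈𝔻^n} |P(z)|. Then for every r ∈ [1, 2m/(m+1)] there is a constant L > 0, independent of n and r, such that (∑_α |a_α|^r)^{1/r} ≤ L^m · n^{m/r - (m+1)/2} · sup_{z∈𝔻^n} |P(z)| for all such polynomials P. -/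
/-- The sup of an `m`-homogeneous polynomial with coefficients `a` on the closed
unit polydisc of `ℂ^n`. -/
noncomputable def supNorm (n m : ℕ) (a : (Fin n → ℕ) → ℂ) : ℝ :=
  ⨆ z : {z : Fin n → ℂ // ∀ i, ‖z i‖ ≤ 1},
    ‖∑ α ∈ Finset.Nat.antidiagonalTuple n m, a α * ∏ i, (z : Fin n → ℂ) i ^ α i‖

/-- ℓ^r–ℓ^t comparison on a finite set via Hölder. -/
lemma lp_card_bound {ι : Type*} (s : Finset ι) (f : ι → ℝ) (hf : ∀ i, 0 ≤ f i)
    {r t : ℝ} (hr : 0 < r) (hrt : r ≤ t) :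
    (∑ i ∈ s, f i ^ r) ^ (1 / r) ≤
      (s.card : ℝ) ^ (1 / r - 1 / t) * (∑ i ∈ s, f i ^ t) ^ (1 / t) := by
  have ht : 0 < t := hr.trans_le hrt
  have hp : 1 ≤ t / r := (one_le_div hr).2 hrt
  have key := Real.inner_le_weight_mul_Lp_of_nonneg s hp (fun _ => 1) (fun i => f i ^ r)
    (fun _ => zero_le_one) (fun i => Real.rpow_nonneg (hf i) r)
  simp only [one_mul, Finset.sum_const, nsmul_eq_mul, mul_one] at key
  have h1 : ∀ i ∈ s, (f i ^ r) ^ (t / r) = f i ^ t := by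
    intro i _
    rw [← Real.rpow_mul (hf i)]
    congr 1
    field_simp
  rw [Finset.sum_congr rfl h1] at key
  have h2 : (∑ i ∈ s, f i ^ r) ^ (1 / r) ≤
      ((s.card : ℝ) ^ (1 - (t / r)⁻¹) * (∑ i ∈ s, f i ^ t) ^ (t / r)⁻¹) ^ (1 / r) :=
    Real.rpow_le_rpow (Finset.sum_nonneg fun i _ => Real.rpow_nonneg (hf i) r) key
      (by positivity)
  refine h2.trans_eq ?_
  have hrne : r ≠ 0 := hr.ne'
  have htne : t ≠ 0 := ht.ne'
  have e1 : (1 - (t / r)⁻¹) * (1 / r) = 1 / r - 1 / t := by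
    rw [inv_div, sub_mul, one_mul, div_mul_div_comm, mul_one, mul_comm t r, ← div_div,
      div_self hrne]
  have e2 : (t / r)⁻¹ * (1 / r) = 1 / t := by
    rw [inv_div, div_mul_div_comm, mul_one, mul_comm t r, ← div_div, div_self hrne]
  rw [Real.mul_rpow (Real.rpow_nonneg (Nat.cast_nonneg _) _)
      (Real.rpow_nonneg (Finset.sum_nonneg fun i _ => Real.rpow_nonneg (hf i) t) _),
    ← Real.rpow_mul (Nat.cast_nonneg _),
    ← Real.rpow_mul (Finset.sum_nonneg fun i _ => Real.rpow_nonneg (hf i) t), e1, e2]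

/-- Cardinality bound for `antidiagonalTuple`. -/
lemma antidiagonalTuple_card_le (n m : ℕ) (hn : 0 < n) :
    (Finset.Nat.antidiagonalTuple n m).card ≤ ((m + 1) * n) ^ m := by
  have h1 : (Finset.Nat.antidiagonalTuple n m).card = Fintype.card (Sym (Fin n) m) := by
    rw [← Fintype.card_coe]
    exact Fintype.card_congr
      ((Equiv.subtypeEquivRight fun x => Finset.Nat.mem_antidiagonalTuple).trans
        (Sym.equivNatSumOfFintype (Fin n) m).symm)
  rw [h1, Sym.card_sym_eq_choose, Fintype.card_fin]
  refine (Nat.choose_le_pow _ _).trans (Nat.pow_le_pow_left ?_ m)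
  calc n + m - 1 ≤ n + m := Nat.sub_le _ _
    _ = m * 1 + n := by ring
    _ ≤ m * n + n := Nat.add_le_add_right (Nat.mul_le_mul_left m hn) n
    _ = (m + 1) * n := by ring

theorem continuum_ineq (m : ℕ) (hm : 0 < m) (D : ℝ) (hD : 1 < D)
    (hBH : ∀ (n : ℕ), 0 < n → ∀ a : (Fin n → ℕ) → ℂ,
      (∑ α ∈ Finset.Nat.antidiagonalTuple n m,
          ‖a α‖ ^ ((2 * m : ℝ) / (m + 1))) ^ (((m : ℝ) + 1) / (2 * m)) ≤
        D ^ m * supNorm n m a) :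
    ∃ L : ℝ, 0 < L ∧ ∀ r : ℝ, 1 ≤ r → r ≤ 2 * m / (m + 1) →
      ∀ (n : ℕ), 0 < n → ∀ a : (Fin n → ℕ) → ℂ,
        (∑ α ∈ Finset.Nat.antidiagonalTuple n m, ‖a α‖ ^ r) ^ (1 / r) ≤
          L ^ m * (n : ℝ) ^ ((m : ℝ) / r - ((m : ℝ) + 1) / 2) * supNorm n m a := by
  have hD0 : 0 < D := lt_trans one_pos hD
  refine ⟨((m : ℝ) + 1) * D, by positivity, ?_⟩
  intro r hr1 hr2 n hn a
  have hm' : (0 : ℝ) < m := by exact_mod_cast hm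
  set t : ℝ := 2 * (m : ℝ) / ((m : ℝ) + 1) with ht_def
  have ht0 : 0 < t := by positivity
  have hrt : r ≤ t := hr2
  have hr0 : 0 < r := lt_of_lt_of_le one_pos hr1
  have hinv : 1 / t = ((m : ℝ) + 1) / (2 * m) := one_div_div _ _
  set N := (Finset.Nat.antidiagonalTuple n m).card with hN_def
  set e : ℝ := 1 / r - 1 / t with he_def
  have he : 0 ≤ e := by
    rw [he_def]
    have := one_div_le_one_div_of_le hr0 hrt
    linarith
  have hsup : 0 ≤ supNorm n m a := Real.iSup_nonneg fun z => norm_nonneg _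
  have key := lp_card_bound (Finset.Nat.antidiagonalTuple n m)
    (fun α => ‖a α‖) (fun _ => norm_nonneg _) hr0 hrt
  have hBH' : (∑ α ∈ Finset.Nat.antidiagonalTuple n m, ‖a α‖ ^ t) ^ (1 / t) ≤
      D ^ m * supNorm n m a := by
    rw [hinv]; exact hBH n hn a
  have step1 : (∑ α ∈ Finset.Nat.antidiagonalTuple n m, ‖a α‖ ^ r) ^ (1 / r) ≤
      (N : ℝ) ^ e * (D ^ m * supNorm n m a) :=
    key.trans (mul_le_mul_of_nonneg_left hBH' (Real.rpow_nonneg (Nat.cast_nonneg _) _))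
  -- bound N^e
  have hcard : (N : ℝ) ≤ (((m : ℝ) + 1) * n) ^ m := by
    have := antidiagonalTuple_card_le n m hn
    calc (N : ℝ) ≤ ((((m + 1) * n : ℕ) : ℝ)) ^ m := by
          rw [← Nat.cast_pow]; exact_mod_cast this
      _ = (((m : ℝ) + 1) * n) ^ m := by push_cast; ring
  have hNe : (N : ℝ) ^ e ≤ ((((m : ℝ) + 1) * n) ^ m) ^ e :=
    Real.rpow_le_rpow (Nat.cast_nonneg _) hcard he
  have hbase : (0 : ℝ) ≤ ((m : ℝ) + 1) * n := by positivity
  have hsplit : ((((m : ℝ) + 1) * n) ^ m) ^ e =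
      ((m : ℝ) + 1) ^ ((m : ℝ) * e) * (n : ℝ) ^ ((m : ℝ) * e) := by
    rw [← Real.rpow_natCast (((m : ℝ) + 1) * n) m, ← Real.rpow_mul hbase,
      Real.mul_rpow (by positivity) (Nat.cast_nonneg _)]
  have hme : (m : ℝ) * e ≤ (m : ℝ) := by
    have h1 : e ≤ 1 := by
      have h1r : 1 / r ≤ 1 := by
        rw [div_le_one hr0]; exact hr1
      have : 0 < 1 / t := by positivity
      rw [he_def]; linarith
    nlinarith
  have hmono : ((m : ℝ) + 1) ^ ((m : ℝ) * e) ≤ ((m : ℝ) + 1) ^ (m : ℝ) :=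
    Real.rpow_le_rpow_of_exponent_le (by linarith) hme
  have hexp : (m : ℝ) * e = (m : ℝ) / r - ((m : ℝ) + 1) / 2 := by
    rw [he_def, ht_def]
    field_simp
  have hNe2 : (N : ℝ) ^ e ≤
      ((m : ℝ) + 1) ^ (m : ℝ) * (n : ℝ) ^ ((m : ℝ) / r - ((m : ℝ) + 1) / 2) := by
    rw [← hexp]
    refine hNe.trans ?_
    rw [hsplit]
    exact mul_le_mul_of_nonneg_right hmono (Real.rpow_nonneg (Nat.cast_nonneg _) _)
  refine step1.trans ?_
  have hfin : (N : ℝ) ^ e * (D ^ m * supNorm n m a) ≤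
      (((m : ℝ) + 1) ^ (m : ℝ) * (n : ℝ) ^ ((m : ℝ) / r - ((m : ℝ) + 1) / 2)) *
        (D ^ m * supNorm n m a) :=
    mul_le_mul_of_nonneg_right hNe2 (by positivity)
  refine hfin.trans_eq ?_
  rw [Real.rpow_natCast, mul_pow]
  ring
end

section
/- Let P: ℝ^n → ℝ be an m-homogeneous polynomial, P(x) = ∑_{|α|=m} a_α x^α with real coefficients, and let P_ℂ: ℂ^n → ℂ be its complexification given by the same formula with complex arguments. Then sup_{z ∈ 𝔻^n} |P_ℂ(z)| ≤ 2^{m-1} · sup_{x ∈ [-1,1]^n} |P(x)|. -/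
open Complex Polynomial Finset in
lemma visser_coeff_prod {ι : Type*} (s : Finset ι) (f : ι → Polynomial ℂ) (d : ι → ℕ)
    (h : ∀ i ∈ s, (f i).natDegree ≤ d i) :
    (∏ i ∈ s, f i).coeff (∑ i ∈ s, d i) = ∏ i ∈ s, (f i).coeff (d i) := by
  induction s using Finset.cons_induction with
  | empty => simp
  | cons i s his ih =>
    rw [Finset.prod_cons, Finset.sum_cons, Finset.prod_cons,
      Polynomial.coeff_mul_add_eq_of_natDegree_le (h i (Finset.mem_cons_self i s))
        (le_trans (Polynomial.natDegree_prod_le _ _)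
          (Finset.sum_le_sum fun j hj => h j (Finset.mem_cons_of_mem hj))),
      ih fun j hj => h j (Finset.mem_cons_of_mem hj)]

open Complex Polynomial Finset in
lemma visser_keysum {n m : ℕ} (hm : 0 < m) (z : Fin n → ℂ) (α : Fin n → ℕ)
    (hα : ∑ i, α i = m) :
    ∑ k ∈ Finset.range m, ∏ j,
        (z j * (Complex.exp (2 * Real.pi * Complex.I / m)) ^ k + (starRingEnd ℂ) (z j)) ^ α j
      = m * (∏ j, z j ^ α j + ∏ j, (starRingEnd ℂ) (z j) ^ α j) := by
  set ζ : ℂ := Complex.exp (2 * Real.pi * Complex.I / m) with hζdef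
  have hζ : IsPrimitiveRoot ζ m := Complex.isPrimitiveRoot_exp m hm.ne'
  set p : Polynomial ℂ := ∏ j, (C (z j) * X + C ((starRingEnd ℂ) (z j))) ^ α j with hp
  have hfdeg : ∀ j : Fin n, ((C (z j) * X + C ((starRingEnd ℂ) (z j))) ^ α j).natDegree ≤ α j := by
    intro j
    refine le_trans Polynomial.natDegree_pow_le ?_
    calc α j * (C (z j) * X + C ((starRingEnd ℂ) (z j))).natDegree
        ≤ α j * 1 := Nat.mul_le_mul_left _ Polynomial.natDegree_linear_le
      _ = α j := mul_one _
  have hdeg : p.natDegree ≤ m := by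
    refine le_trans (Polynomial.natDegree_prod_le _ _) ?_
    rw [← hα]
    exact Finset.sum_le_sum fun j _ => hfdeg j
  have heval : ∀ x : ℂ, p.eval x = ∏ j, (z j * x + (starRingEnd ℂ) (z j)) ^ α j := by
    intro x; simp [hp, Polynomial.eval_prod]
  have hcoeff0 : p.coeff 0 = ∏ j, (starRingEnd ℂ) (z j) ^ α j := by
    rw [Polynomial.coeff_zero_eq_eval_zero, heval]; simp
  have hcoeffm : p.coeff m = ∏ j, z j ^ α j := by
    rw [hp, ← hα, visser_coeff_prod _ _ _ (fun j _ => hfdeg j)]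
    refine Finset.prod_congr rfl fun j _ => ?_
    have := Polynomial.coeff_pow_of_natDegree_le
      (p := C (z j) * X + C ((starRingEnd ℂ) (z j))) (n := 1) (m := α j)
      Polynomial.natDegree_linear_le
    rw [mul_one] at this
    rw [this]
    simp
  have hgeom : ∀ i ∈ Finset.range (m + 1),
      (∑ k ∈ Finset.range m, (ζ ^ i) ^ k) = if i = 0 ∨ i = m then (m : ℂ) else 0 := by
    intro i hi
    rw [Finset.mem_range, Nat.lt_succ_iff] at hi
    by_cases h0 : i = 0
    · simp [h0]
    by_cases hM : i = m
    · subst hM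
      simp [hζ.pow_eq_one]
    · have hne : ζ ^ i ≠ 1 := hζ.pow_ne_one_of_pos_of_lt h0
        (lt_of_le_of_ne hi hM)
    
      rw [if_neg (by tauto), geom_sum_eq hne]
      rw [← pow_mul, mul_comm i m, pow_mul, hζ.pow_eq_one, one_pow]
      simp
  calc ∑ k ∈ Finset.range m, ∏ j, (z j * ζ ^ k + (starRingEnd ℂ) (z j)) ^ α j
      = ∑ k ∈ Finset.range m, p.eval (ζ ^ k) := by simp [heval]
    _ = ∑ k ∈ Finset.range m, ∑ i ∈ Finset.range (m + 1), p.coeff i * (ζ ^ k) ^ i := by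
        refine Finset.sum_congr rfl fun k _ => ?_
        exact Polynomial.eval_eq_sum_range' (Nat.lt_succ_of_le hdeg) _
    _ = ∑ i ∈ Finset.range (m + 1), p.coeff i * ∑ k ∈ Finset.range m, (ζ ^ i) ^ k := by
        rw [Finset.sum_comm]
        refine Finset.sum_congr rfl fun i _ => ?_
        rw [Finset.mul_sum]
        refine Finset.sum_congr rfl fun k _ => ?_
        rw [← pow_mul, ← pow_mul, mul_comm k i]
    _ = ∑ i ∈ Finset.range (m + 1), (if i = 0 ∨ i = m then p.coeff i * m else 0) := by
        refine Finset.sum_congr rfl fun i hi => ?_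
        rw [hgeom i hi]
        split <;> simp
    _ = ∑ i ∈ ({0, m} : Finset ℕ), (if i = 0 ∨ i = m then p.coeff i * m else 0) := by
        refine (Finset.sum_subset ?_ ?_).symm
        · intro x hx
          rw [Finset.mem_insert, Finset.mem_singleton] at hx
          rw [Finset.mem_range, Nat.lt_succ_iff]
          rcases hx with rfl | rfl
          · exact Nat.zero_le _
          · exact le_refl _
        · intro x _ hx
          rw [Finset.mem_insert, Finset.mem_singleton] at hx
          rw [if_neg hx]
    _ = m * (∏ j, z j ^ α j + ∏ j, (starRingEnd ℂ) (z j) ^ α j) := by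
        rw [Finset.sum_pair hm.ne, if_pos (Or.inl rfl), if_pos (Or.inr rfl),
          hcoeff0, hcoeffm]
        ring

open Complex Finset in
lemma visser_re_bound (m n : ℕ) (hm : 0 < m) (a : (Fin n → ℕ) → ℝ)
    (z : Fin n → ℂ) (hz : ∀ i, ‖z i‖ ≤ 1) (S : ℝ)
    (hS : ∀ x : Fin n → ℝ, (∀ i, |x i| ≤ 1) →
      |∑ α ∈ Finset.Nat.antidiagonalTuple n m, a α * ∏ i, x i ^ α i| ≤ S) :
    (∑ α ∈ Finset.Nat.antidiagonalTuple n m, (a α : ℂ) * ∏ i, z i ^ α i).re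
      ≤ 2 ^ (m - 1) * S := by
  have hmC : (m : ℂ) ≠ 0 := Nat.cast_ne_zero.mpr hm.ne'
  set ζ : ℂ := Complex.exp (2 * Real.pi * Complex.I / m) with hζdef
  set x : ℕ → Fin n → ℝ := fun k j =>
    (z j * Complex.exp ((Real.pi * k / m : ℝ) * Complex.I)).re with hxdef
  have hx : ∀ k j, |x k j| ≤ 1 := by
    intro k j
    refine le_trans (Complex.abs_re_le_norm _) ?_
    rw [norm_mul, Complex.norm_exp_ofReal_mul_I, mul_one]
    exact hz j
  have hre2 : ∀ u : ℂ, ((u.re : ℝ) : ℂ) = (u + (starRingEnd ℂ) u) / 2 := by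
    intro u; rw [Complex.add_conj]; push_cast; ring
  -- the per-point identity
  have key : ∀ k ∈ Finset.range m,
      ((-1 : ℂ)) ^ k * 2 ^ m *
          ((∑ α ∈ Finset.Nat.antidiagonalTuple n m, a α * ∏ i, x k i ^ α i : ℝ) : ℂ)
        = ∑ α ∈ Finset.Nat.antidiagonalTuple n m,
            (a α : ℂ) * ∏ j, (z j * ζ ^ k + (starRingEnd ℂ) (z j)) ^ α j := by
    intro k _
    set s : ℂ := Complex.exp ((Real.pi * k / m : ℝ) * Complex.I) with hsdef
    have hs2 : s ^ 2 = ζ ^ k := by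
      rw [hsdef, hζdef, sq, ← Complex.exp_add, ← Complex.exp_nat_mul]
      congr 1
      push_cast
      field_simp
      ring
    have hsconj : (starRingEnd ℂ) s = Complex.exp (((-(Real.pi * k / m)) : ℝ) * Complex.I) := by
      rw [hsdef, ← Complex.exp_conj]
      congr 1
      simp
    have hsmul : s * (starRingEnd ℂ) s = 1 := by
      rw [hsdef, Complex.mul_conj]
      norm_cast
      rw [← Complex.sq_norm, Complex.norm_exp_ofReal_mul_I]
      norm_num
    have hsm : ((starRingEnd ℂ) s) ^ m = (-1) ^ k := by
      rw [hsconj, ← Complex.exp_nat_mul]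
      have : (m : ℂ) * (((-(Real.pi * k / m)) : ℝ) * Complex.I)
          = (k : ℂ) * (-(Real.pi : ℂ) * Complex.I) := by
        push_cast
        field_simp
      rw [this, Complex.exp_nat_mul, neg_mul, Complex.exp_neg, Complex.exp_pi_mul_I]
      norm_num
    have hxc : ∀ j, ((x k j : ℝ) : ℂ) * 2
        = (starRingEnd ℂ) s * (z j * ζ ^ k + (starRingEnd ℂ) (z j)) := by
      intro j
      have h1 : ((x k j : ℝ) : ℂ)
          = (z j * s + (starRingEnd ℂ) (z j) * (starRingEnd ℂ) s) / 2 := by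
        rw [show x k j = (z j * s).re from rfl, hre2, map_mul]
      rw [h1, ← hs2]
      linear_combination (-(z j * s)) * hsmul
    calc ((-1 : ℂ)) ^ k * 2 ^ m *
          ((∑ α ∈ Finset.Nat.antidiagonalTuple n m, a α * ∏ i, x k i ^ α i : ℝ) : ℂ)
        = (-1 : ℂ) ^ k * 2 ^ m * ∑ α ∈ Finset.Nat.antidiagonalTuple n m,
            (a α : ℂ) * ∏ i, ((x k i : ℝ) : ℂ) ^ α i := by push_cast; ring
      _ = ∑ α ∈ Finset.Nat.antidiagonalTuple n m,
            (a α : ℂ) * ∏ j, (z j * ζ ^ k + (starRingEnd ℂ) (z j)) ^ α j := by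
          rw [Finset.mul_sum]
          refine Finset.sum_congr rfl fun α hα => ?_
          have hαm : ∑ i, α i = m := Finset.Nat.mem_antidiagonalTuple.mp hα
          have hprod : (∏ i, ((x k i : ℝ) : ℂ) ^ α i) * 2 ^ m
              = (-1 : ℂ) ^ k *
                ∏ j, (z j * ζ ^ k + (starRingEnd ℂ) (z j)) ^ α j := by
            rw [← hsm, ← hαm,
              ← Finset.prod_pow_eq_pow_sum (s := Finset.univ) (f := α) (a := (2 : ℂ)),
              ← Finset.prod_pow_eq_pow_sum (s := Finset.univ) (f := α)
                (a := (starRingEnd ℂ) s),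
              ← Finset.prod_mul_distrib, ← Finset.prod_mul_distrib]
            refine Finset.prod_congr rfl fun j _ => ?_
            rw [← mul_pow, ← mul_pow, hxc j]
          calc (-1 : ℂ) ^ k * 2 ^ m * ((a α : ℂ) * ∏ i, ((x k i : ℝ) : ℂ) ^ α i)
              = (-1 : ℂ) ^ k * (a α : ℂ) *
                  ((∏ i, ((x k i : ℝ) : ℂ) ^ α i) * 2 ^ m) := by ring
            _ = ((-1 : ℂ) ^ k * (-1 : ℂ) ^ k) *
                  ((a α : ℂ) * ∏ j, (z j * ζ ^ k + (starRingEnd ℂ) (z j)) ^ α j) := by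
                rw [hprod]; ring
            _ = (a α : ℂ) * ∏ j, (z j * ζ ^ k + (starRingEnd ℂ) (z j)) ^ α j := by
                rw [← mul_pow]; norm_num
  -- sum the identity over k
  set w : ℂ := ∑ α ∈ Finset.Nat.antidiagonalTuple n m, (a α : ℂ) * ∏ i, z i ^ α i with hw
  have hconjw : (starRingEnd ℂ) w
      = ∑ α ∈ Finset.Nat.antidiagonalTuple n m,
          (a α : ℂ) * ∏ i, (starRingEnd ℂ) (z i) ^ α i := by
    rw [hw, map_sum]
    exact Finset.sum_congr rfl fun α _ => by rw [map_mul, map_prod]; simp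
  have hsum : ∑ k ∈ Finset.range m,
      ((-1 : ℂ)) ^ k * 2 ^ m *
        ((∑ α ∈ Finset.Nat.antidiagonalTuple n m, a α * ∏ i, x k i ^ α i : ℝ) : ℂ)
      = (m : ℂ) * (w + (starRingEnd ℂ) w) := by
    rw [Finset.sum_congr rfl key, Finset.sum_comm]
    rw [hw, hconjw, ← Finset.sum_add_distrib, Finset.mul_sum]
    refine Finset.sum_congr rfl fun α hα => ?_
    rw [← Finset.mul_sum,
      visser_keysum hm z α (Finset.Nat.mem_antidiagonalTuple.mp hα)]
    ring
  -- take real parts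
  have h3 : ((∑ k ∈ Finset.range m,
      ((-1 : ℝ)) ^ k * 2 ^ m *
        (∑ α ∈ Finset.Nat.antidiagonalTuple n m, a α * ∏ i, x k i ^ α i) : ℝ) : ℂ)
      = ((2 * m * w.re : ℝ) : ℂ) := by
    rw [Complex.ofReal_sum]
    rw [show ((2 * (m : ℝ) * w.re : ℝ) : ℂ) = (m : ℂ) * (w + (starRingEnd ℂ) w) by
      rw [Complex.add_conj]; push_cast; ring]
    rw [← hsum]
    refine Finset.sum_congr rfl fun k _ => ?_
    push_cast
    ring
  have hre : ∑ k ∈ Finset.range m,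
      ((-1 : ℝ)) ^ k * 2 ^ m *
        (∑ α ∈ Finset.Nat.antidiagonalTuple n m, a α * ∏ i, x k i ^ α i)
      = 2 * m * w.re := by exact_mod_cast h3
  -- conclude
  have hterm : ∀ k ∈ Finset.range m,
      ((-1 : ℝ)) ^ k * 2 ^ m *
        (∑ α ∈ Finset.Nat.antidiagonalTuple n m, a α * ∏ i, x k i ^ α i)
      ≤ 2 ^ m * S := by
    intro k _
    have h1 : ((-1 : ℝ)) ^ k *
        (∑ α ∈ Finset.Nat.antidiagonalTuple n m, a α * ∏ i, x k i ^ α i) ≤ S := by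
      refine le_trans (le_trans (le_abs_self _) ?_) (hS (x k) (hx k))
      rw [abs_mul, _root_.abs_pow, _root_.abs_neg, abs_one, one_pow, one_mul]
    calc ((-1 : ℝ)) ^ k * 2 ^ m *
          (∑ α ∈ Finset.Nat.antidiagonalTuple n m, a α * ∏ i, x k i ^ α i)
        = 2 ^ m * (((-1 : ℝ)) ^ k *
          (∑ α ∈ Finset.Nat.antidiagonalTuple n m, a α * ∏ i, x k i ^ α i)) := by ring
      _ ≤ 2 ^ m * S := mul_le_mul_of_nonneg_left h1 (by positivity)
  have hle : 2 * (m : ℝ) * w.re ≤ m * (2 ^ m * S) := by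
    rw [← hre]
    refine le_trans (Finset.sum_le_sum hterm) ?_
    rw [Finset.sum_const, Finset.card_range, nsmul_eq_mul]
  have h2m : (2 : ℝ) ^ m = 2 * 2 ^ (m - 1) := by
    rw [← pow_succ']
    congr 1
    omega
  rw [h2m] at hle
  have hmpos : (0 : ℝ) < m := Nat.cast_pos.mpr hm
  nlinarith [hmpos]

theorem visser (m n : ℕ) (hm : 0 < m) (hn : 0 < n) (a : (Fin n → ℕ) → ℝ) :
    (⨆ z : {z : Fin n → ℂ // ∀ i, ‖z i‖ ≤ 1},
        ‖∑ α ∈ Finset.Nat.antidiagonalTuple n m,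
            (a α : ℂ) * ∏ i, (z : Fin n → ℂ) i ^ α i‖) ≤
      2 ^ (m - 1) *
        ⨆ x : {x : Fin n → ℝ // ∀ i, |x i| ≤ 1},
          |∑ α ∈ Finset.Nat.antidiagonalTuple n m,
              a α * ∏ i, (x : Fin n → ℝ) i ^ α i| := by
  haveI hne1 : Nonempty {z : Fin n → ℂ // ∀ i, ‖z i‖ ≤ 1} :=
    ⟨⟨0, fun i => by simp⟩⟩
  haveI hne2 : Nonempty {x : Fin n → ℝ // ∀ i, |x i| ≤ 1} :=
    ⟨⟨0, fun i => by simp⟩⟩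
  set S : ℝ := ⨆ x : {x : Fin n → ℝ // ∀ i, |x i| ≤ 1},
      |∑ α ∈ Finset.Nat.antidiagonalTuple n m,
          a α * ∏ i, (x : Fin n → ℝ) i ^ α i| with hSdef
  have hbdd : BddAbove (Set.range fun x : {x : Fin n → ℝ // ∀ i, |x i| ≤ 1} =>
      |∑ α ∈ Finset.Nat.antidiagonalTuple n m,
          a α * ∏ i, (x : Fin n → ℝ) i ^ α i|) := by
    refine ⟨∑ α ∈ Finset.Nat.antidiagonalTuple n m, |a α|, ?_⟩
    rintro r ⟨⟨x, hx⟩, rfl⟩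
    refine le_trans (Finset.abs_sum_le_sum_abs _ _) (Finset.sum_le_sum fun α _ => ?_)
    rw [abs_mul]
    have h1 : |∏ i, x i ^ α i| ≤ 1 := by
      rw [Finset.abs_prod]
      refine Finset.prod_le_one (fun i _ => abs_nonneg _) fun i _ => ?_
      rw [abs_pow]
      exact pow_le_one₀ (abs_nonneg _) (hx i)
    nlinarith [abs_nonneg (a α)]
  have hS : ∀ x : Fin n → ℝ, (∀ i, |x i| ≤ 1) →
      |∑ α ∈ Finset.Nat.antidiagonalTuple n m, a α * ∏ i, x i ^ α i| ≤ S :=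
    fun x hx => le_ciSup hbdd ⟨x, hx⟩
  refine ciSup_le ?_
  rintro ⟨z, hz⟩
  set w : ℂ := ∑ α ∈ Finset.Nat.antidiagonalTuple n m, (a α : ℂ) * ∏ i, z i ^ α i with hw
  set c : ℂ := Complex.exp (((-(Complex.arg w) / m) : ℝ) * Complex.I) with hc
  have hcm : c ^ m * w = ((‖w‖ : ℝ) : ℂ) := by
    rw [hc, ← Complex.exp_nat_mul]
    have hmC : (m : ℂ) ≠ 0 := Nat.cast_ne_zero.mpr hm.ne'
    have h1 : (m : ℂ) * (((-(Complex.arg w) / m) : ℝ) * Complex.I)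
        = -((Complex.arg w : ℂ) * Complex.I) := by
      push_cast
      field_simp
    rw [h1]
    nth_rewrite 2 [← Complex.norm_mul_exp_arg_mul_I w]
    rw [show Complex.exp (-((Complex.arg w : ℂ) * Complex.I)) *
          (((‖w‖ : ℝ) : ℂ) * Complex.exp ((Complex.arg w : ℂ) * Complex.I))
        = ((‖w‖ : ℝ) : ℂ) *
          (Complex.exp (-((Complex.arg w : ℂ) * Complex.I)) *
            Complex.exp ((Complex.arg w : ℂ) * Complex.I)) from by ring,
      ← Complex.exp_add, neg_add_cancel, Complex.exp_zero, mul_one]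
  have hz' : ∀ i, ‖c * z i‖ ≤ 1 := by
    intro i
    rw [norm_mul, hc, Complex.norm_exp_ofReal_mul_I, one_mul]
    exact hz i
  have hP' : ∑ α ∈ Finset.Nat.antidiagonalTuple n m,
      (a α : ℂ) * ∏ i, (c * z i) ^ α i = ((‖w‖ : ℝ) : ℂ) := by
    rw [← hcm, hw, Finset.mul_sum]
    refine Finset.sum_congr rfl fun α hα => ?_
    have hαm : ∑ i, α i = m := Finset.Nat.mem_antidiagonalTuple.mp hα
    rw [show ∏ i, (c * z i) ^ α i = (∏ i, c ^ α i) * ∏ i, z i ^ α i from by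
        rw [← Finset.prod_mul_distrib]; exact Finset.prod_congr rfl fun i _ => mul_pow _ _ _,
      Finset.prod_pow_eq_pow_sum, hαm]
    ring
  have hbound := visser_re_bound m n hm a (fun i => c * z i) hz' S hS
  rw [hP'] at hbound
  rw [Complex.ofReal_re] at hbound
  calc ‖∑ α ∈ Finset.Nat.antidiagonalTuple n m, (a α : ℂ) * ∏ i, z i ^ α i‖
      = ‖w‖ := by rw [hw]
    _ ≤ 2 ^ (m - 1) * S := hbound
end

section
/- Let m ≥ 1 and suppose there exist constants D > 1 (Bohnenblust–Hille) and C_KSZ > 0 (Kahane–Salem–Zygmund, providing for each n > m an m-homogeneous ±1-coefficient polynomial P_n on ℂ^n with ‖P_n‖_∞ ≤ C_KSZ · n^{(m+1)/2}√(log m)). Then for each r ∈ [1, 2m/(m+1)], the infimum of all exponents t such that some constant C satisfies ‖P‖_r ≤ C · n^t · ‖P‖_∞ for all n and all m-homogeneous polynomials P on ℂ^n equals exactly m/r - (m+1)/2. -/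
lemma aux_card_le (n m : ℕ) :
    (Finset.Nat.antidiagonalTuple n m).card ≤ (n + m - 1).choose m := by
  classical
  have key : (Finset.Nat.antidiagonalTuple n m).card ≤ Fintype.card (Sym (Fin n) m) := by
    rw [← Fintype.card_coe]
    refine Fintype.card_le_of_injective
      (fun α => ⟨∑ i, Multiset.replicate ((α : Fin n → ℕ) i) i, by
        have hα := Finset.Nat.mem_antidiagonalTuple.mp α.2
        exact (map_sum (⟨⟨Multiset.card, Multiset.card_zero⟩, Multiset.card_add⟩ :
          Multiset (Fin n) →+ ℕ) _ _).trans
          (by simpa [Multiset.card_replicate] using hα)⟩) ?_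
    intro a b h
    have h' : (∑ j, Multiset.replicate ((a : Fin n → ℕ) j) j)
        = ∑ j, Multiset.replicate ((b : Fin n → ℕ) j) j :=
      congrArg Subtype.val h
    ext1
    funext i
    have := congrArg (Multiset.count i) h'
    simpa [Multiset.count_sum', Multiset.count_replicate] using this
  calc (Finset.Nat.antidiagonalTuple n m).card ≤ Fintype.card (Sym (Fin n) m) := key
    _ = Nat.multichoose n m := by
        simpa [Fintype.card_fin] using Sym.card_sym_eq_multichoose (Fin n) m
    _ = (n + m - 1).choose m := Nat.multichoose_eq n m

lemma aux_choose_le_card (n m : ℕ) :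
    n.choose m ≤ (Finset.Nat.antidiagonalTuple n m).card := by
  classical
  have := Finset.card_le_card_of_injOn
    (f := fun s : Finset (Fin n) => fun i => if i ∈ s then 1 else 0)
    (s := Finset.powersetCard m Finset.univ)
    (t := Finset.Nat.antidiagonalTuple n m)
    (fun s hs => by
      rw [Finset.mem_coe, Finset.Nat.mem_antidiagonalTuple]
      rw [Finset.sum_ite_mem, Finset.univ_inter]
      simpa using (Finset.mem_powersetCard.mp hs).2)
    (by
      intro s hs s' hs' h
      ext i
      have h1 := congrFun h i
      by_cases his : i ∈ s <;> by_cases his' : i ∈ s' <;>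
        simp [his, his'] at h1 ⊢)
  simpa [Finset.card_powersetCard, Finset.card_univ] using this

theorem optimal_exponent (m : ℕ) (hm : 0 < m) (D : ℝ) (hD : 1 < D)
    (hBH : ∀ (n : ℕ), 0 < n → ∀ a : (Fin n → ℕ) → ℂ,
      (∑ α ∈ Finset.Nat.antidiagonalTuple n m,
          ‖a α‖ ^ ((2 * m : ℝ) / (m + 1))) ^ (((m : ℝ) + 1) / (2 * m)) ≤
        D ^ m * supNorm n m a)
    (CKSZ : ℝ) (hCKSZ : 0 < CKSZ)
    (hKSZ : ∀ n : ℕ, m < n → ∃ ε : (Fin n → ℕ) → ℂ,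
      (∀ α ∈ Finset.Nat.antidiagonalTuple n m, ε α = 1 ∨ ε α = -1) ∧
        supNorm n m ε ≤ CKSZ * (n : ℝ) ^ (((m : ℝ) + 1) / 2) * Real.sqrt (Real.log m)) :
    ∀ r : ℝ, 1 ≤ r → r ≤ 2 * m / (m + 1) →
      sInf {t : ℝ | ∃ C : ℝ, 0 < C ∧ ∀ (n : ℕ), 0 < n → ∀ a : (Fin n → ℕ) → ℂ,
          (∑ α ∈ Finset.Nat.antidiagonalTuple n m, ‖a α‖ ^ r) ^ (1 / r) ≤
            C * (n : ℝ) ^ t * supNorm n m a} =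
        (m : ℝ) / r - ((m : ℝ) + 1) / 2 := by
  intro r hr1 hr2
  classical
  have hmR : (0:ℝ) < (m:ℝ) := by exact_mod_cast hm
  set q : ℝ := 2 * (m:ℝ) / ((m:ℝ) + 1) with hqdef
  have hr0 : 0 < r := lt_of_lt_of_le one_pos hr1
  have hrq : r ≤ q := hr2
  have hq1 : 1 ≤ q := le_trans hr1 hrq
  have hq0 : 0 < q := lt_of_lt_of_le one_pos hq1
  have hqinv : 1 / q = ((m:ℝ) + 1) / (2 * m) := by
    rw [hqdef, one_div_div]
  set t₀ : ℝ := (m:ℝ) / r - ((m:ℝ) + 1) / 2 with ht₀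
  set e : ℝ := 1 / r - 1 / q with he
  have he0 : 0 ≤ e := by
    have := one_div_le_one_div_of_le hr0 hrq
    simpa [he] using sub_nonneg.mpr this
  have hme : (m:ℝ) * e = t₀ := by
    rw [he, ht₀, hqdef]
    field_simp
  -- Membership of t₀ in the set
  have hmem : ∃ C : ℝ, 0 < C ∧ ∀ (n : ℕ), 0 < n → ∀ a : (Fin n → ℕ) → ℂ,
      (∑ α ∈ Finset.Nat.antidiagonalTuple n m, ‖a α‖ ^ r) ^ (1 / r) ≤
        C * (n : ℝ) ^ t₀ * supNorm n m a := by
    refine ⟨D ^ m * (((m:ℝ) + 1) ^ m) ^ e, by positivity, fun n hn a => ?_⟩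
    set s := Finset.Nat.antidiagonalTuple n m with hs
    set S1 : ℝ := ∑ α ∈ s, ‖a α‖ ^ q with hS1
    have hS1nonneg : 0 ≤ S1 :=
      Finset.sum_nonneg fun α _ => Real.rpow_nonneg (norm_nonneg _) q
    have hsup : 0 ≤ D ^ m * supNorm n m a := by
      refine le_trans (Real.rpow_nonneg ?_ _) (hBH n hn a)
      exact Finset.sum_nonneg fun α _ => Real.rpow_nonneg (norm_nonneg _) _
    -- Step 1: Hölder
    have h1 : ∑ α ∈ s, ‖a α‖ ^ r ≤ ((s.card : ℝ)) ^ (1 - r / q) * S1 ^ (r / q) := by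
      have hp1 : 1 ≤ q / r := (one_le_div hr0).2 hrq
      have H := Real.inner_le_weight_mul_Lp_of_nonneg s hp1 (fun _ => (1:ℝ))
        (fun α => ‖a α‖ ^ r) (fun _ => zero_le_one)
        (fun α => Real.rpow_nonneg (norm_nonneg _) r)
      simp only [one_mul] at H
      rw [Finset.sum_const, nsmul_eq_mul, mul_one] at H
      have hexp : (q / r)⁻¹ = r / q := by rw [inv_div]
      rw [hexp] at H
      refine H.trans (le_of_eq ?_)
      have hsumeq : ∑ α ∈ s, (‖a α‖ ^ r) ^ (q / r) = S1 := by
        rw [hS1]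
        refine Finset.sum_congr rfl fun α _ => ?_
        rw [← Real.rpow_mul (norm_nonneg _), mul_comm, div_mul_cancel₀ q (ne_of_gt hr0)]
      rw [hsumeq]
    -- Step 2: raise to 1/r
    have h2 : (∑ α ∈ s, ‖a α‖ ^ r) ^ (1 / r) ≤ ((s.card : ℝ)) ^ e * S1 ^ (1 / q) := by
      have hL : 0 ≤ ∑ α ∈ s, ‖a α‖ ^ r :=
        Finset.sum_nonneg fun α _ => Real.rpow_nonneg (norm_nonneg _) r
      have := Real.rpow_le_rpow hL h1 (by positivity : (0:ℝ) ≤ 1 / r)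
      refine this.trans (le_of_eq ?_)
      have hxp1 : (1 - r / q) * (1 / r) = e := by
        rw [he, sub_mul, one_mul, div_mul_div_comm, mul_one, mul_comm q r, ← div_div,
          div_self (ne_of_gt hr0)]
      have hxp2 : (r / q) * (1 / r) = 1 / q := by
        rw [div_mul_div_comm, mul_one, mul_comm q r, ← div_div, div_self (ne_of_gt hr0)]
      rw [Real.mul_rpow (Real.rpow_nonneg (Nat.cast_nonneg _) _)
        (Real.rpow_nonneg hS1nonneg _),
        ← Real.rpow_mul (Nat.cast_nonneg _), ← Real.rpow_mul hS1nonneg, hxp1, hxp2]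
    -- Step 3: Bohnenblust–Hille
    have h3 : S1 ^ (1 / q) ≤ D ^ m * supNorm n m a := by
      rw [hqinv]
      exact hBH n hn a
    -- Step 4: bound the cardinality
    have h4 : ((s.card : ℝ)) ^ e ≤ (((m:ℝ) + 1) ^ m) ^ e * ((n:ℝ)) ^ t₀ := by
      have hcardN : s.card ≤ ((m + 1) * n) ^ m := by
        refine (aux_card_le n m).trans ?_
        refine (Nat.choose_le_pow _ _).trans (Nat.pow_le_pow_left ?_ m)
        have : n + m ≤ (m + 1) * n := by nlinarith [hn, hm]
        omega
      have hcast : ((s.card : ℝ)) ≤ (((m:ℝ) + 1) * n) ^ m := by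
        have h := (Nat.cast_le (α := ℝ)).2 hcardN
        push_cast at h
        exact h
      calc ((s.card : ℝ)) ^ e ≤ ((((m:ℝ) + 1) * n) ^ m) ^ e :=
            Real.rpow_le_rpow (Nat.cast_nonneg _) hcast he0
        _ = (((m:ℝ) + 1) ^ m) ^ e * ((n:ℝ)) ^ t₀ := by
            rw [mul_pow, Real.mul_rpow (by positivity) (by positivity)]
            congr 1
            rw [← Real.rpow_natCast (n:ℝ) m, ← Real.rpow_mul (Nat.cast_nonneg _), hme]
    calc (∑ α ∈ s, ‖a α‖ ^ r) ^ (1 / r)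
        ≤ ((s.card : ℝ)) ^ e * S1 ^ (1 / q) := h2
      _ ≤ ((s.card : ℝ)) ^ e * (D ^ m * supNorm n m a) :=
          mul_le_mul_of_nonneg_left h3 (Real.rpow_nonneg (Nat.cast_nonneg _) _)
      _ ≤ ((((m:ℝ) + 1) ^ m) ^ e * ((n:ℝ)) ^ t₀) * (D ^ m * supNorm n m a) :=
          mul_le_mul_of_nonneg_right h4 hsup
      _ = D ^ m * (((m:ℝ) + 1) ^ m) ^ e * (n:ℝ) ^ t₀ * supNorm n m a := by ring
  -- Lower bound: every element of the set is ≥ t₀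
  have hlb : ∀ t : ℝ, (∃ C : ℝ, 0 < C ∧ ∀ (n : ℕ), 0 < n → ∀ a : (Fin n → ℕ) → ℂ,
      (∑ α ∈ Finset.Nat.antidiagonalTuple n m, ‖a α‖ ^ r) ^ (1 / r) ≤
        C * (n : ℝ) ^ t * supNorm n m a) → t₀ ≤ t := by
    rintro t ⟨C, hC, hCle⟩
    by_contra hcon
    push_neg at hcon
    have hspos : 0 < t₀ - t := by linarith
    set K : ℝ := 2 ^ ((m:ℝ) / r) * (m.factorial : ℝ) ^ (1 / r) * C * CKSZ *
      Real.sqrt (Real.log m) with hK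
    have key : ∀ n : ℕ, 2 * m ≤ n → ((n:ℝ)) ^ (t₀ - t) ≤ K := by
      intro n hn
      have hmn : m < n := by omega
      have hn0 : 0 < n := by omega
      have hx0 : (0:ℝ) < (n:ℝ) := by exact_mod_cast hn0
      have hnm : 2 * (m:ℝ) ≤ (n:ℝ) := by exact_mod_cast hn
      obtain ⟨ε, hε1, hε2⟩ := hKSZ n hmn
      set s := Finset.Nat.antidiagonalTuple n m with hs
      have hsum : ∑ α ∈ s, ‖ε α‖ ^ r = (s.card : ℝ) := by
        rw [Finset.card_eq_sum_ones]
        push_cast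
        refine Finset.sum_congr rfl fun α hα => ?_
        rcases hε1 α hα with h | h <;> simp [h, Real.one_rpow]
      -- lower bound for the card
      have hcard : ((n:ℝ) / 2) ^ m / (m.factorial : ℝ) ≤ (s.card : ℝ) := by
        have h1 : ((n:ℝ) / 2) ^ m ≤ (((n + 1 - m : ℕ)) : ℝ) ^ m := by
          refine pow_le_pow_left₀ (by positivity) ?_ m
          rw [Nat.cast_sub (by omega)]
          push_cast
          linarith
        have h2 : ((((n + 1 - m : ℕ)) : ℝ) ^ m) / (m.factorial : ℝ) ≤ (n.choose m : ℝ) := by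
          have := Nat.pow_le_choose (α := ℝ) m n
          push_cast at this ⊢
          exact this
        have h3 : ((n.choose m : ℕ) : ℝ) ≤ (s.card : ℝ) := by
          exact_mod_cast aux_choose_le_card n m
        calc ((n:ℝ) / 2) ^ m / (m.factorial : ℝ)
            ≤ ((((n + 1 - m : ℕ)) : ℝ) ^ m) / (m.factorial : ℝ) :=
              (div_le_div_iff_of_pos_right (by exact_mod_cast m.factorial_pos)).2 h1
          _ ≤ (n.choose m : ℝ) := h2
          _ ≤ (s.card : ℝ) := h3
      -- combine with the hypothesis inequality
      have hineq := hCle n hn0 ε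
      rw [hsum] at hineq
      have hCn : 0 ≤ C * (n:ℝ) ^ t := mul_nonneg hC.le (Real.rpow_nonneg hx0.le t)
      have hineq2 : ((s.card : ℝ)) ^ (1 / r) ≤
          C * (n:ℝ) ^ t * (CKSZ * (n:ℝ) ^ (((m:ℝ) + 1) / 2) * Real.sqrt (Real.log m)) :=
        hineq.trans (mul_le_mul_of_nonneg_left hε2 hCn)
      have hlhs : (n:ℝ) ^ ((m:ℝ) / r) / (2 ^ ((m:ℝ) / r) * (m.factorial : ℝ) ^ (1 / r)) ≤
          ((s.card : ℝ)) ^ (1 / r) := by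
        have h0 : (0:ℝ) ≤ ((n:ℝ) / 2) ^ m / (m.factorial : ℝ) := by positivity
        have hmono := Real.rpow_le_rpow h0 hcard (by positivity : (0:ℝ) ≤ 1 / r)
        refine le_trans (le_of_eq ?_) hmono
        rw [Real.div_rpow (by positivity) (Nat.cast_nonneg _),
          ← Real.rpow_natCast ((n:ℝ) / 2) m, ← Real.rpow_mul (by positivity),
          mul_one_div, Real.div_rpow hx0.le (by norm_num : (0:ℝ) ≤ 2), div_div]
      have hcomb : (n:ℝ) ^ ((m:ℝ) / r) ≤ K * (n:ℝ) ^ (t + ((m:ℝ) + 1) / 2) := by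
        have hpos : (0:ℝ) < 2 ^ ((m:ℝ) / r) * (m.factorial : ℝ) ^ (1 / r) := by positivity
        have hh := hlhs.trans hineq2
        rw [div_le_iff₀ hpos] at hh
        refine hh.trans (le_of_eq ?_)
        rw [hK, Real.rpow_add hx0]
        ring
      have hP : (0:ℝ) < (n:ℝ) ^ (t + ((m:ℝ) + 1) / 2) := Real.rpow_pos_of_pos hx0 _
      rw [← mul_le_mul_iff_of_pos_right hP]
      calc (n:ℝ) ^ (t₀ - t) * (n:ℝ) ^ (t + ((m:ℝ) + 1) / 2) = (n:ℝ) ^ ((m:ℝ) / r) := by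
            rw [← Real.rpow_add hx0]
            congr 1
            rw [ht₀]
            ring
        _ ≤ K * (n:ℝ) ^ (t + ((m:ℝ) + 1) / 2) := hcomb
    have htend : Filter.Tendsto (fun n : ℕ => ((n:ℝ)) ^ (t₀ - t))
        Filter.atTop Filter.atTop :=
      (tendsto_rpow_atTop hspos).comp tendsto_natCast_atTop_atTop
    obtain ⟨n, hn1, hn2⟩ :=
      ((htend.eventually_gt_atTop K).and (Filter.eventually_ge_atTop (2 * m))).exists
    exact absurd (key n hn2) (not_le.2 hn1)
  refine le_antisymm (csInf_le ⟨t₀, fun t ht => hlb t ht⟩ hmem) (le_csInf ⟨t₀, hmem⟩ hlb)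
end

section
/- Let m ≥ 2. Assume the multilinear/polynomial Bohnenblust–Hille inequality: there is D > 1 with ‖P‖_{2m/(m+1)} ≤ D^m ‖P‖_∞ for all m-homogeneous polynomials P on ℂ^n, all n. Then the Sidon constant S_1(m,n), defined as the smallest constant with ‖P‖_1 ≤ S_1(m,n)‖P‖_∞ for all such P, satisfies S_1(m,n) ≤ E^m · n^{(m-1)/2} for some absolute constant E > 0 independent of m, n. -/
lemma multichoose_le_pow : ∀ n k : ℕ, Nat.multichoose n k ≤ n ^ k := by
  intro n
  induction n with
  | zero =>
    intro k
    cases k with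
    | zero => simp
    | succ k => simp [Nat.multichoose_zero_succ]
  | succ n ih =>
    intro k
    induction k with
    | zero => simp
    | succ k ihk =>
      rw [Nat.multichoose_succ_succ]
      have h1 : Nat.multichoose n (k + 1) ≤ n ^ (k + 1) := ih (k + 1)
      have h2 : n ^ (k + 1) ≤ n * (n + 1) ^ k := by
        rw [pow_succ, mul_comm]
        exact Nat.mul_le_mul_left n (Nat.pow_le_pow_left (Nat.le_succ n) k)
      calc Nat.multichoose n (k + 1) + Nat.multichoose (n + 1) k
          ≤ n * (n + 1) ^ k + (n + 1) ^ k := by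
            exact Nat.add_le_add (le_trans h1 h2) ihk
        _ = (n + 1) ^ (k + 1) := by ring
  
lemma card_antidiagonalTuple_le (n m : ℕ) :
    (Finset.Nat.antidiagonalTuple n m).card ≤ n ^ m := by
  classical
  have hinj : Function.Injective
      (fun x : {x // x ∈ Finset.Nat.antidiagonalTuple n m} =>
        (⟨∑ i, (x : Fin n → ℕ) i • ({i} : Multiset (Fin n)), by
          obtain ⟨x, hx⟩ := x
          rw [Finset.Nat.mem_antidiagonalTuple] at hx
          rw [Multiset.card_sum]
          simpa using hx⟩ : Sym (Fin n) m)) := by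
    intro x y hxy
    have hcount : ∀ j : Fin n, (x : Fin n → ℕ) j = (y : Fin n → ℕ) j := by
      intro j
      have := congrArg (fun s : Sym (Fin n) m => Multiset.count j (s : Multiset (Fin n))) hxy
      simpa [Multiset.count_sum', Multiset.count_singleton,
        Finset.sum_ite_eq' (Finset.univ : Finset (Fin n))] using this
    exact Subtype.ext (funext hcount)
  have h1 : (Finset.Nat.antidiagonalTuple n m).card ≤ Fintype.card (Sym (Fin n) m) := by
    rw [← Fintype.card_coe]
    exact Fintype.card_le_of_injective _ hinj
  have h2 : Fintype.card (Sym (Fin n) m) = Nat.multichoose n m := by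
    rw [Sym.card_sym_eq_multichoose, Fintype.card_fin]
  exact h1.trans (by rw [h2]; exact multichoose_le_pow n m)

theorem sidon_constant_bound (m : ℕ) (hm : 2 ≤ m) (D : ℝ) (hD : 1 < D)
    (hBH : ∀ (n : ℕ), 0 < n → ∀ a : (Fin n → ℕ) → ℂ,
      (∑ α ∈ Finset.Nat.antidiagonalTuple n m,
          ‖a α‖ ^ ((2 * m : ℝ) / (m + 1))) ^ (((m : ℝ) + 1) / (2 * m)) ≤
        D ^ m * supNorm n m a) :
    ∃ E : ℝ, 0 < E ∧ ∀ (n : ℕ), 0 < n → ∀ a : (Fin n → ℕ) → ℂ,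
      (∑ α ∈ Finset.Nat.antidiagonalTuple n m, ‖a α‖) ≤
        E ^ m * (n : ℝ) ^ (((m : ℝ) - 1) / 2) * supNorm n m a := by
  refine ⟨D, lt_trans one_pos hD, fun n hn a => ?_⟩
  have hm0 : (0 : ℝ) < m := by positivity
  set s := Finset.Nat.antidiagonalTuple n m with hs
  set p : ℝ := (2 * m) / (m + 1) with hp
  have hp1 : 1 ≤ p := by
    have hm1 : (1 : ℝ) ≤ m := by exact_mod_cast le_trans one_le_two hm
    rw [hp, le_div_iff₀ (by positivity)]
    nlinarith
  have hpinv : p⁻¹ = ((m : ℝ) + 1) / (2 * m) := by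
    rw [hp, inv_div]
  have hpinv' : 1 - p⁻¹ = ((m : ℝ) - 1) / (2 * m) := by
    rw [hpinv]; field_simp; ring
  -- Hölder
  have holder := Real.inner_le_weight_mul_Lp_of_nonneg s hp1 (fun _ => 1)
      (fun α => ‖a α‖) (fun _ => zero_le_one) (fun α => norm_nonneg _)
  simp only [one_mul] at holder
  have hcard : (∑ _α ∈ s, (1 : ℝ)) = (s.card : ℝ) := by simp
  rw [hcard, hpinv', hpinv] at holder
  -- Bohnenblust–Hille bound for the Lp term
  have hT : (∑ α ∈ s, ‖a α‖ ^ p) ^ (((m : ℝ) + 1) / (2 * m)) ≤ D ^ m * supNorm n m a := by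
    have := hBH n hn a
    rw [hp]; exact this
  have hT0 : (0 : ℝ) ≤ (∑ α ∈ s, ‖a α‖ ^ p) ^ (((m : ℝ) + 1) / (2 * m)) := by
    apply Real.rpow_nonneg
    exact Finset.sum_nonneg fun α _ => Real.rpow_nonneg (norm_nonneg _) _
  -- card bound
  have hcardle : (s.card : ℝ) ≤ (n : ℝ) ^ (m : ℕ) := by
    exact_mod_cast card_antidiagonalTuple_le n m
  have hexp0 : (0 : ℝ) ≤ ((m : ℝ) - 1) / (2 * m) := by
    apply div_nonneg _ (by positivity)
    have : (1 : ℝ) ≤ m := by exact_mod_cast le_trans one_le_two hm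
    linarith
  have hcardpow : (s.card : ℝ) ^ (((m : ℝ) - 1) / (2 * m)) ≤
      (n : ℝ) ^ (((m : ℝ) - 1) / 2) := by
    calc (s.card : ℝ) ^ (((m : ℝ) - 1) / (2 * m))
        ≤ ((n : ℝ) ^ (m : ℕ)) ^ (((m : ℝ) - 1) / (2 * m)) :=
          Real.rpow_le_rpow (Nat.cast_nonneg _) hcardle hexp0
      _ = (n : ℝ) ^ (((m : ℝ) - 1) / 2) := by
          rw [← Real.rpow_natCast (n : ℝ) m, ← Real.rpow_mul (Nat.cast_nonneg n)]
          congr 1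
          field_simp
  have hrhs0 : (0 : ℝ) ≤ D ^ m * supNorm n m a := le_trans hT0 hT
  calc (∑ α ∈ s, ‖a α‖)
      ≤ (s.card : ℝ) ^ (((m : ℝ) - 1) / (2 * m)) *
        (∑ α ∈ s, ‖a α‖ ^ p) ^ (((m : ℝ) + 1) / (2 * m)) := holder
    _ ≤ (n : ℝ) ^ (((m : ℝ) - 1) / 2) * (D ^ m * supNorm n m a) := by
        apply mul_le_mul hcardpow hT hT0 (Real.rpow_nonneg (Nat.cast_nonneg _) _)
    _ = D ^ m * (n : ℝ) ^ (((m : ℝ) - 1) / 2) * supNorm n m a := by ring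
end
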